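/- (Characterization of (p,q)-Appell sequences) A sequence (f_n)_{n≥0} of real polynomials with deg f_n = n is (p,q)-Appell if and only if there exists a sequence of real numbers (a_k)_{k≥0}, independent of n, with a_0 ≠ 0, such that f_n(x) = ∑_{k=0}^{n} [n choose k]_{p,q} p^{(n−k)(n−k−1)/2} a_k x^{n−k} for all n ≥ 0 and all x. -/

import Mathlib

noncomputable section
open Finset Polynomial

/-- The (p,q)-number `[n]_{p,q} = (p^n - q^n)/(p - q)`. -/
def pqNum (p q : ℝ) (n : ℕ) : ℝ := (p ^ n - q ^ n) / (p - q)

/-- The (p,q)-factorial `[n]_{p,q}! = ∏_{k=1}^n [k]_{p,q}`. -/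
def pqFact (p q : ℝ) (n : ℕ) : ℝ := ∏ k ∈ Finset.Icc 1 n, pqNum p q k

/-- The (p,q)-binomial coefficient. -/
def pqBinom (p q : ℝ) (n k : ℕ) : ℝ := pqFact p q n / (pqFact p q k * pqFact p q (n - k))

/-- The (p,q)-derivative on polynomials: the linear operator with `D(X^n) = [n]_{p,q} X^(n-1)`. -/
def pqDeriv (p q : ℝ) (f : Polynomial ℝ) : Polynomial ℝ :=
  f.sum fun n a => Polynomial.C (a * pqNum p q n) * Polynomial.X ^ (n - 1)

/-- The (p,q)-derivative on formal power series, acting coefficientwise by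
`D(X^n) = [n]_{p,q} X^(n-1)`. -/
def pqDerivPS (p q : ℝ) (f : PowerSeries ℝ) : PowerSeries ℝ :=
  PowerSeries.mk fun n => pqNum p q (n + 1) * PowerSeries.coeff (n + 1) f

/-- The double (p,q)-factorial `[2m]_{p,q}!! = ∏_{k=1}^m [2k]_{p,q}`. -/
def pqDoubleFact (p q : ℝ) (m : ℕ) : ℝ := ∏ k ∈ Finset.Icc 1 m, pqNum p q (2 * k)

/-- A sequence of real polynomials of exact degree `n` is (p,q)-Appell when
`D_{p,q} f_{n+1}(x) = [n+1]_{p,q} f_n(p x)` for all `n ≥ 0` and all `x`. -/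
def IsPQAppell (p q : ℝ) (f : ℕ → Polynomial ℝ) : Prop :=
  (∀ n, (f n).natDegree = n) ∧
    ∀ (n : ℕ) (x : ℝ), (pqDeriv p q (f (n + 1))).eval x = pqNum p q (n + 1) * (f n).eval (p * x)

/- ### Auxiliary lemmas -/

lemma pqNum_zero' (p q : ℝ) : pqNum p q 0 = 0 := by simp [pqNum]

lemma pqNum_pos {p q : ℝ} (hq : 0 < q) (hpq : q < p) {n : ℕ} (hn : n ≠ 0) :
    0 < pqNum p q n := by
  have h1 : q ^ n < p ^ n := pow_lt_pow_left₀ hpq hq.le hn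
  exact div_pos (sub_pos.mpr h1) (sub_pos.mpr hpq)

lemma pqFact_pos {p q : ℝ} (hq : 0 < q) (hpq : q < p) (n : ℕ) : 0 < pqFact p q n := by
  refine Finset.prod_pos fun k hk => pqNum_pos hq hpq ?_
  simp only [Finset.mem_Icc] at hk; omega

lemma pqFact_succ (p q : ℝ) (n : ℕ) :
    pqFact p q (n + 1) = pqFact p q n * pqNum p q (n + 1) := by
  unfold pqFact
  rw [Finset.prod_Icc_succ_top (by omega)]

lemma pqFact_zero' (p q : ℝ) : pqFact p q 0 = 1 := by simp [pqFact]

lemma pqBinom_self {p q : ℝ} (hq : 0 < q) (hpq : q < p) (n : ℕ) : pqBinom p q n n = 1 := by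
  unfold pqBinom
  rw [Nat.sub_self, pqFact_zero', mul_one, div_self (pqFact_pos hq hpq n).ne']

lemma pqBinom_key {p q : ℝ} (hq : 0 < q) (hpq : q < p) {n k : ℕ} (hk : k ≤ n) :
    pqBinom p q (n + 1) k * pqNum p q (n + 1 - k) = pqNum p q (n + 1) * pqBinom p q n k := by
  have h1 : n + 1 - k = (n - k) + 1 := by omega
  unfold pqBinom
  rw [h1, pqFact_succ, pqFact_succ]
  have f1 := (pqFact_pos hq hpq k).ne'
  have f2 := (pqFact_pos hq hpq (n - k)).ne'
  have f3 := (pqNum_pos hq hpq (n := n - k + 1) (by omega)).ne'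
  field_simp

lemma pqDeriv_monomial (p q : ℝ) (c : ℝ) (m : ℕ) :
    pqDeriv p q (Polynomial.C c * Polynomial.X ^ m)
      = Polynomial.C (c * pqNum p q m) * Polynomial.X ^ (m - 1) := by
  rw [Polynomial.C_mul_X_pow_eq_monomial]
  unfold pqDeriv
  rw [Polynomial.sum_monomial_index]
  simp

lemma pqDeriv_add (p q : ℝ) (f g : Polynomial ℝ) :
    pqDeriv p q (f + g) = pqDeriv p q f + pqDeriv p q g := by
  unfold pqDeriv
  rw [Polynomial.sum_add_index]
  · intro i; simp
  · intro i b c; rw [add_mul, Polynomial.C_add, add_mul]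

lemma pqDeriv_sum (p q : ℝ) {ι : Type*} (s : Finset ι) (F : ι → Polynomial ℝ) :
    pqDeriv p q (∑ i ∈ s, F i) = ∑ i ∈ s, pqDeriv p q (F i) := by
  classical
  induction s using Finset.induction with
  | empty => simp [pqDeriv]
  | insert _ _ h ih =>
      rw [Finset.sum_insert h, Finset.sum_insert h, pqDeriv_add, ih]

lemma pqDeriv_coeff (p q : ℝ) (f : Polynomial ℝ) (m : ℕ) :
    (pqDeriv p q f).coeff m = f.coeff (m + 1) * pqNum p q (m + 1) := by
  induction f using Polynomial.induction_on' with
  | add f g hf hg => rw [pqDeriv_add]; simp [hf, hg, add_mul]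
  | monomial n a =>
      rw [← Polynomial.C_mul_X_pow_eq_monomial, pqDeriv_monomial]
      simp only [Polynomial.coeff_C_mul, Polynomial.coeff_X_pow]
      cases n with
      | zero => simp [pqNum_zero']
      | succ s =>
          by_cases h : m = s
          · subst h; simp
          · rw [if_neg (by omega), if_neg (by omega)]; simp

/-- The candidate (p,q)-Appell polynomial with coefficient sequence `a`. -/
def gpoly (p q : ℝ) (a : ℕ → ℝ) (n : ℕ) : Polynomial ℝ :=
  ∑ k ∈ Finset.range (n + 1),
    Polynomial.C (pqBinom p q n k * p ^ ((n - k) * (n - k - 1) / 2) * a k)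
      * Polynomial.X ^ (n - k)

lemma gpoly_eval (p q : ℝ) (a : ℕ → ℝ) (n : ℕ) (x : ℝ) :
    (gpoly p q a n).eval x = ∑ k ∈ Finset.range (n + 1),
      pqBinom p q n k * p ^ ((n - k) * (n - k - 1) / 2) * a k * x ^ (n - k) := by
  rw [gpoly, Polynomial.eval_finset_sum]
  simp

lemma gpoly_eval_zero {p q : ℝ} (hq : 0 < q) (hpq : q < p) (a : ℕ → ℝ) (n : ℕ) :
    (gpoly p q a n).eval 0 = a n := by
  rw [gpoly_eval, Finset.sum_eq_single n]
  · simp [pqBinom_self hq hpq]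
  · intro k hk hkn
    have h : n - k ≠ 0 := by simp only [Finset.mem_range] at hk; omega
    simp [zero_pow h]
  · intro h; exact absurd (Finset.self_mem_range_succ n) h

lemma tri (m : ℕ) : (m + 1) * m / 2 = m * (m - 1) / 2 + m := by
  cases m with
  | zero => rfl
  | succ s =>
      simp only [Nat.add_sub_cancel]
      have h : (s + 1 + 1) * (s + 1) = (s + 1) * s + 2 * (s + 1) := by ring
      rw [h, Nat.add_mul_div_left _ _ (by norm_num : 0 < 2)]

lemma pqDeriv_gpoly {p q : ℝ} (hq : 0 < q) (hpq : q < p) (a : ℕ → ℝ) (n : ℕ) (x : ℝ) :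
    (pqDeriv p q (gpoly p q a (n + 1))).eval x
      = pqNum p q (n + 1) * (gpoly p q a n).eval (p * x) := by
  have hL : (pqDeriv p q (gpoly p q a (n + 1))).eval x
      = ∑ k ∈ Finset.range (n + 2),
          pqBinom p q (n + 1) k * p ^ ((n + 1 - k) * (n + 1 - k - 1) / 2) * a k
            * pqNum p q (n + 1 - k) * x ^ (n + 1 - k - 1) := by
    rw [gpoly, pqDeriv_sum, Polynomial.eval_finset_sum]
    refine Finset.sum_congr rfl fun k hk => ?_
    rw [pqDeriv_monomial]
    simp only [Polynomial.eval_mul, Polynomial.eval_C, Polynomial.eval_pow, Polynomial.eval_X]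
  rw [hL, Finset.sum_range_succ]
  have h0 : pqNum p q (n + 1 - (n + 1)) = 0 := by simp [pqNum_zero']
  rw [h0, mul_zero, zero_mul, add_zero, gpoly_eval, Finset.mul_sum]
  refine Finset.sum_congr rfl fun k hk => ?_
  have hkn : k ≤ n := by simp only [Finset.mem_range] at hk; omega
  have h1 : n + 1 - k - 1 = n - k := by omega
  have h2 : (n + 1 - k) * (n + 1 - k - 1) / 2 = (n - k) * (n - k - 1) / 2 + (n - k) := by
    have h3 : n + 1 - k = (n - k) + 1 := by omega
    rw [h3]
    simpa using tri (n - k)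
  rw [h2, h1, pow_add, mul_pow]
  linear_combination (p ^ ((n - k) * (n - k - 1) / 2) * p ^ (n - k) * a k * x ^ (n - k)) *
    pqBinom_key hq hpq hkn

lemma eq_of_pqDeriv_eq {p q : ℝ} (hq : 0 < q) (hpq : q < p) {F G : Polynomial ℝ}
    (h1 : pqDeriv p q F = pqDeriv p q G) (h0 : F.coeff 0 = G.coeff 0) : F = G := by
  ext m
  cases m with
  | zero => exact h0
  | succ s =>
      have h := congrArg (fun f => Polynomial.coeff f s) h1
      simp only [pqDeriv_coeff] at h
      exact mul_right_cancel₀ (pqNum_pos hq hpq (n := s + 1) (by omega)).ne' h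

/-- a sequence of polynomials of exact degrees is (p,q)-Appell iff its members
admit an expansion with coefficients independent of n. -/
theorem pq_appell_characterization (p q : ℝ) (hq : 0 < q) (hpq : q < p)
    (f : ℕ → Polynomial ℝ) (hdeg : ∀ n, (f n).natDegree = n) :
    (∀ (n : ℕ) (x : ℝ),
        (pqDeriv p q (f (n + 1))).eval x = pqNum p q (n + 1) * (f n).eval (p * x))
      ↔ ∃ a : ℕ → ℝ, a 0 ≠ 0 ∧ ∀ (n : ℕ) (x : ℝ),
          (f n).eval x = ∑ k ∈ Finset.range (n + 1),
            pqBinom p q n k * p ^ ((n - k) * (n - k - 1) / 2) * a k * x ^ (n - k) := by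
  constructor
  · intro hAppell
    set a : ℕ → ℝ := fun n => (f n).eval 0 with ha
    have hfg : ∀ n, f n = gpoly p q a n := by
      intro n
      induction n with
      | zero =>
          have h0 : f 0 = Polynomial.C ((f 0).coeff 0) :=
            Polynomial.eq_C_of_natDegree_eq_zero (hdeg 0)
          have hg : gpoly p q a 0 = Polynomial.C (a 0) := by
            simp [gpoly, pqBinom_self hq hpq]
          rw [hg, h0, Polynomial.coeff_zero_eq_eval_zero]
      | succ n ih =>
          apply eq_of_pqDeriv_eq hq hpq
          · apply Polynomial.funext
            intro x
            rw [pqDeriv_gpoly hq hpq, hAppell, ih]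
          · rw [Polynomial.coeff_zero_eq_eval_zero, Polynomial.coeff_zero_eq_eval_zero,
              gpoly_eval_zero hq hpq]
    refine ⟨a, ?_, fun n x => by rw [hfg n, gpoly_eval]⟩
    intro ha0
    have h1ne : f 1 ≠ 0 := by
      intro h
      have := hdeg 1
      rw [h] at this
      simp at this
    have hlc : (f 1).coeff 1 ≠ 0 := by
      have := Polynomial.leadingCoeff_ne_zero.mpr h1ne
      rwa [Polynomial.leadingCoeff, hdeg 1] at this
    apply hlc
    rw [hfg 1]
    show (gpoly p q a (0 + 1)).coeff 1 = 0
    rw [gpoly]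
    rw [Finset.sum_range_succ, Finset.sum_range_succ, Finset.range_zero, Finset.sum_empty]
    simp [ha0]
  · rintro ⟨a, _, hexp⟩
    have hfg : ∀ n, f n = gpoly p q a n := fun n =>
      Polynomial.funext fun x => by rw [hexp, gpoly_eval]
    intro n x
    rw [hfg (n + 1), hfg n, pqDeriv_gpoly hq hpq]
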